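/- Let $r \geq 1$ be an integer, let $w > 0$ and $s, n, e$ be real numbers, and suppose $e < -\left| n + (r-1)\frac{s^2}{2w} \right|$. Let $m \geq 1$ be an integer and let $k_1, \dots, k_m$ be positive integers with $k_1 + \cdots + k_m = r$. Suppose $f_1, \dots, f_m$ and $g_1, \dots, g_m$ are real numbers satisfying, for every $i$: $f_i^2 \leq \frac{(s \cdot k_i / r)^2}{w}$ and $g_i \leq \frac{f_i^2}{2 k_i}$, and additionally $\sum_{i=1}^m g_i \geq -n$. Then $g_i > e$ for every $i = 1, \dots, m$. -/

import Mathlib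

/-- Lemma 2.3(ii) of the paper (full numerical content): under the hypothesis
`e < -|n + (r-1) s^2/(2w)|`, with ranks `k i` summing to `r`, Hodge-index bounds
`(f i)^2 ≤ (s * k i / r)^2 / w`, Bogomolov bounds `g i ≤ (f i)^2 / (2 * k i)`,
and `∑ g i ≥ -n`, one has `g i > e` for every `i`. -/
theorem stmt0 (r : ℕ) (hr : 1 ≤ r) (w s n e : ℝ) (hw : 0 < w)
    (he : e < -|n + ((r : ℝ) - 1) * s ^ 2 / (2 * w)|)
    (m : ℕ) (hm : 1 ≤ m) (k : Fin m → ℕ) (hk : ∀ i, 0 < k i)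
    (hsum : ∑ i, k i = r)
    (f g : Fin m → ℝ)
    (hf : ∀ i, (f i) ^ 2 ≤ (s * (k i : ℝ) / (r : ℝ)) ^ 2 / w)
    (hg : ∀ i, g i ≤ (f i) ^ 2 / (2 * (k i : ℝ)))
    (hgsum : -n ≤ ∑ i, g i) :
    ∀ i, e < g i := by
  intro i
  set R := (r : ℝ) with hRdef
  have hR : (1:ℝ) ≤ R := by rw [hRdef]; exact_mod_cast hr
  have hR0 : (0:ℝ) < R := by linarith
  -- pointwise bound g j ≤ s^2 * k j / (2 R^2 w)
  have hC : ∀ j, g j ≤ s ^ 2 * (k j : ℝ) / (2 * R ^ 2 * w) := by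
    intro j
    have hkj : (0:ℝ) < (k j : ℝ) := by exact_mod_cast hk j
    have h1 : g j ≤ ((s * (k j : ℝ) / R) ^ 2 / w) / (2 * (k j : ℝ)) := by
      refine (hg j).trans ?_
      gcongr
      exact hf j
    have h2 : ((s * (k j : ℝ) / R) ^ 2 / w) / (2 * (k j : ℝ))
        = s ^ 2 * (k j : ℝ) / (2 * R ^ 2 * w) := by
      field_simp
    linarith [h2 ▸ h1]
  -- sum over the complement of i
  have hmemi : i ∈ Finset.univ := Finset.mem_univ i
  have hsplitg : ∑ j, g j = g i + ∑ j ∈ Finset.univ.erase i, g j :=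
    (Finset.add_sum_erase _ g hmemi).symm
  have hsplitk : (k i : ℝ) + ∑ j ∈ Finset.univ.erase i, (k j : ℝ) = R := by
    rw [Finset.add_sum_erase _ (fun j => ((k j : ℝ))) hmemi]
    rw [hRdef, ← hsum]
    push_cast
    rfl
  have hki1 : (1:ℝ) ≤ (k i : ℝ) := by exact_mod_cast hk i
  have hD : (0:ℝ) < 2 * R ^ 2 * w := by positivity
  have hsumC : ∑ j ∈ Finset.univ.erase i, g j
      ≤ s ^ 2 * (R - (k i : ℝ)) / (2 * R ^ 2 * w) := by
    have h1 : ∑ j ∈ Finset.univ.erase i, g j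
        ≤ ∑ j ∈ Finset.univ.erase i, s ^ 2 * (k j : ℝ) / (2 * R ^ 2 * w) :=
      Finset.sum_le_sum (fun j _ => hC j)
    have h2 : ∑ j ∈ Finset.univ.erase i, s ^ 2 * (k j : ℝ) / (2 * R ^ 2 * w)
        = s ^ 2 * (∑ j ∈ Finset.univ.erase i, (k j : ℝ)) / (2 * R ^ 2 * w) := by
      rw [Finset.mul_sum, Finset.sum_div]
    have h3 : ∑ j ∈ Finset.univ.erase i, (k j : ℝ) = R - (k i : ℝ) := by
      linarith
    rw [h2, h3] at h1
    exact h1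
  -- so g i ≥ -n - s^2 (R - k i)/(2 R^2 w)
  have hgi : -n - s ^ 2 * (R - (k i : ℝ)) / (2 * R ^ 2 * w) ≤ g i := by
    have := hgsum
    rw [hsplitg] at this
    linarith
  -- bound the error term
  have hbound : s ^ 2 * (R - (k i : ℝ)) / (2 * R ^ 2 * w)
      ≤ (R - 1) * s ^ 2 / (2 * w) := by
    rw [div_le_div_iff₀ hD (by positivity)]
    have h1 : (0:ℝ) ≤ s ^ 2 * (R - 1) * w :=
      mul_nonneg (mul_nonneg (sq_nonneg s) (by linarith)) hw.le
    have h2 : (1:ℝ) ≤ R ^ 2 := by nlinarith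
    nlinarith [mul_nonneg h1 (by linarith : (0:ℝ) ≤ R ^ 2 - 1),
      mul_nonneg (mul_nonneg (sq_nonneg s) (by linarith : (0:ℝ) ≤ (k i : ℝ) - 1)) hw.le,
      sq_nonneg R]
  have habs : -|n + (R - 1) * s ^ 2 / (2 * w)| ≤ -(n + (R - 1) * s ^ 2 / (2 * w)) :=
    neg_le_neg (le_abs_self _)
  linarith
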